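/- Let r : ℤ → ℝ³ be a discrete space curve with t_j = r_{j+1} − r_j, let k ∈ ℤ satisfy det[r_{k−1}, r_k, r_{k+1}] ≠ 0, and suppose the centroaffine torsion τ_k = det[t_{k−1}, t_k, t_{k+1}]/det[r_{k−1}, r_k, r_{k+1}] vanishes. Then the edge tangent vectors satisfy the planar chain relation t_{k+1} = −κ_k · t_{k−1} + κ̄_k · t_k, where κ_k = det[r_k, r_{k+1}, r_{k+2}]/det[r_{k−1}, r_k, r_{k+1}] and κ̄_k = det[r_{k+1}, t_{k−1}, r_{k+2}]/det[r_{k−1}, r_k, r_{k+1}]. -/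

import Mathlib

/-- Determinant of the 3×3 matrix with columns `u`, `v`, `w`. -/
noncomputable def det3 (u v w : Fin 3 → ℝ) : ℝ :=
  (Matrix.transpose (Matrix.of ![u, v, w])).det

/-- If the centroaffine torsion vanishes at `k`, the edge tangent vectors satisfy the
planar chain relation `t (k+1) = -κ • t (k-1) + κ̄ • t k`. -/
theorem tangent_chain_of_torsion_zero (r : ℤ → Fin 3 → ℝ) (t : ℤ → Fin 3 → ℝ)
    (ht : ∀ j, t j = r (j + 1) - r j) (k : ℤ)
    (hnd : det3 (r (k - 1)) (r k) (r (k + 1)) ≠ 0)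
    (κ κbar : ℝ)
    (hκ : κ = det3 (r k) (r (k + 1)) (r (k + 2)) / det3 (r (k - 1)) (r k) (r (k + 1)))
    (hκbar : κbar = det3 (r (k + 1)) (t (k - 1)) (r (k + 2)) / det3 (r (k - 1)) (r k) (r (k + 1)))
    (hτ : det3 (t (k - 1)) (t k) (t (k + 1)) / det3 (r (k - 1)) (r k) (r (k + 1)) = 0) :
    t (k + 1) = (-κ) • t (k - 1) + κbar • t k := by
  have hT : det3 (t (k - 1)) (t k) (t (k + 1)) = 0 := by
    rcases div_eq_zero_iff.mp hτ with h | h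
    · exact h
    · exact absurd h hnd
  have ht1 : t (k - 1) = r k - r (k - 1) := by have := ht (k - 1); rwa [sub_add_cancel] at this
  have ht2 : t k = r (k + 1) - r k := ht k
  have ht3 : t (k + 1) = r (k + 2) - r (k + 1) := by have := ht (k + 1); rw [this]; ring_nf
  subst hκ hκbar
  rw [ht1, ht2, ht3] at hT ⊢
  simp only [det3, Matrix.det_fin_three, Pi.sub_apply, Matrix.transpose_apply, Matrix.of_apply,
    Matrix.cons_val', Matrix.cons_val_zero, Matrix.cons_val_one, Matrix.head_cons,
    Matrix.head_fin_const, Matrix.empty_val', Matrix.cons_val_fin_one, Matrix.cons_val_two,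
    Matrix.tail_cons] at hT hnd ⊢
  funext i
  refine mul_left_cancel₀ hnd ?_
  simp only [Pi.add_apply, Pi.smul_apply, Pi.sub_apply, smul_eq_mul]
  fin_cases i <;>
    simp only [Fin.zero_eta, Fin.mk_one, Fin.reduceFinMk] <;>
    simp only [mul_add, mul_neg, ← mul_assoc, mul_div_cancel₀ _ hnd] <;>
    [linear_combination (r (k + 1) 0) * hT;
     linear_combination (r (k + 1) 1) * hT;
     linear_combination (r (k + 1) 2) * hT]
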